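/- (RUB implies exact recovery, vector version) Let 0 < p ≤ q ≤ 1, let r and kr be positive integers with k > 1, and let A : ℝ^N → ℝ^L be a linear map. Suppose there exist constants C₁, C₂ > 0 with C₂/C₁ < k^{(1/p−1/2)q} such that C₁‖x‖_2^q ≤ ‖Ax‖_q^q / L ≤ C₂‖x‖_2^q for every (k+1)r-sparse vector x. Then every r-sparse vector x₀ is the unique minimizer of min ‖x‖_p^p subject to Ax = Ax₀. -/

import Mathlib

open scoped BigOperators NNReal

section helpers

lemma rub_rpow_add_le {x y t : ℝ} (hx : 0 ≤ x) (hy : 0 ≤ y) (ht : 0 ≤ t) (ht1 : t ≤ 1) :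
    (x + y) ^ t ≤ x ^ t + y ^ t := by
  have h := NNReal.rpow_add_le_add_rpow (⟨x, hx⟩ : ℝ≥0) (⟨y, hy⟩ : ℝ≥0) ht ht1
  have h' := (NNReal.coe_le_coe).2 h
  push_cast [NNReal.coe_rpow] at h'
  exact h'

lemma rub_add_rpow_le {x y t : ℝ} (hx : 0 ≤ x) (hy : 0 ≤ y) (ht : 1 ≤ t) :
    x ^ t + y ^ t ≤ (x + y) ^ t := by
  have h := NNReal.add_rpow_le_rpow_add (⟨x, hx⟩ : ℝ≥0) (⟨y, hy⟩ : ℝ≥0) ht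
  have h' := (NNReal.coe_le_coe).2 h
  push_cast [NNReal.coe_rpow] at h'
  exact h'

lemma rub_abs_sum_rpow {ι : Type*} (F : Finset ι) (f : ι → ℝ) {t : ℝ} (ht : 0 < t) (ht1 : t ≤ 1) :
    |∑ j ∈ F, f j| ^ t ≤ ∑ j ∈ F, |f j| ^ t := by
  classical
  induction F using Finset.induction_on with
  | empty => simp [Real.zero_rpow ht.ne']
  | insert a F' hnot ih =>
    rw [Finset.sum_insert hnot, Finset.sum_insert hnot]
    calc |f a + ∑ j ∈ F', f j| ^ t ≤ (|f a| + |∑ j ∈ F', f j|) ^ t :=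
          Real.rpow_le_rpow (abs_nonneg _) (abs_add_le _ _) ht.le
      _ ≤ |f a| ^ t + |∑ j ∈ F', f j| ^ t :=
          rub_rpow_add_le (abs_nonneg _) (abs_nonneg _) ht.le ht1
      _ ≤ |f a| ^ t + ∑ j ∈ F', |f j| ^ t := by linarith [ih]

lemma rub_sum_rpow_le {ι : Type*} (F : Finset ι) (c : ι → ℝ) (hc : ∀ i ∈ F, 0 ≤ c i)
    {t : ℝ} (ht : 1 ≤ t) : ∑ i ∈ F, c i ^ t ≤ (∑ i ∈ F, c i) ^ t := by
  classical
  induction F using Finset.induction_on with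
  | empty => simp [Real.zero_rpow (by positivity : t ≠ 0)]
  | insert a F' hnot ih =>
    rw [Finset.sum_insert hnot, Finset.sum_insert hnot]
    have hca : 0 ≤ c a := hc a (Finset.mem_insert_self _ _)
    have hF' : ∀ i ∈ F', 0 ≤ c i := fun i hi => hc i (Finset.mem_insert_of_mem hi)
    have hsum : 0 ≤ ∑ i ∈ F', c i := Finset.sum_nonneg hF'
    calc c a ^ t + ∑ i ∈ F', c i ^ t ≤ c a ^ t + (∑ i ∈ F', c i) ^ t := by linarith [ih hF']
      _ ≤ (c a + ∑ i ∈ F', c i) ^ t := rub_add_rpow_le hca hsum ht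

lemma rub_holder {ι : Type*} (F : Finset ι) (b : ι → ℝ) (hb : ∀ i ∈ F, 0 ≤ b i)
    {t : ℝ} (ht : 0 < t) (ht2 : t ≤ 2) :
    ∑ i ∈ F, b i ^ t ≤ (F.card : ℝ) ^ (1 - t / 2) * (∑ i ∈ F, b i ^ 2) ^ (t / 2) := by
  classical
  rcases F.eq_empty_or_nonempty with rfl | hne
  · simp [Real.zero_rpow (by positivity : t / 2 ≠ 0)]
  have hn : (0 : ℝ) < (F.card : ℝ) := by exact_mod_cast Finset.card_pos.2 hne
  set n : ℝ := (F.card : ℝ) with hn'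
  have hw' : ∑ _i ∈ F, (1 / n) = 1 := by
    rw [Finset.sum_const, nsmul_eq_mul, ← hn']
    field_simp
  have hexp : (1 : ℝ) ≤ 2 / t := (one_le_div ht).2 ht2
  have h := Real.rpow_arith_mean_le_arith_mean_rpow F (fun _ => 1 / n) (fun i => b i ^ t)
    (fun i _ => by positivity) hw' (fun i hi => Real.rpow_nonneg (hb i hi) t) hexp
  have hz2 : ∀ i ∈ F, (b i ^ t) ^ (2 / t) = b i ^ 2 := by
    intro i hi
    rw [← Real.rpow_natCast (b i) 2, ← Real.rpow_mul (hb i hi)]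
    congr 1
    field_simp
    norm_num
  rw [← Finset.mul_sum, ← Finset.mul_sum] at h
  rw [Finset.sum_congr rfl hz2] at h
  set X := ∑ i ∈ F, b i ^ t with hX
  set Y := ∑ i ∈ F, b i ^ 2 with hY
  have hX0 : 0 ≤ X := Finset.sum_nonneg fun i hi => Real.rpow_nonneg (hb i hi) t
  have hY0 : 0 ≤ Y := Finset.sum_nonneg fun i _ => sq_nonneg _
  have h2 : 1 / n * X ≤ (1 / n * Y) ^ (t / 2) := by
    have := Real.rpow_le_rpow (Real.rpow_nonneg (by positivity) _) h (by positivity : 0 ≤ t / 2)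
    rwa [← Real.rpow_mul (by positivity), div_mul_div_comm, mul_comm 2 t,
      div_self (by positivity : t * 2 ≠ 0), Real.rpow_one] at this
  have h3 : X ≤ n * (1 / n * Y) ^ (t / 2) := by
    have := mul_le_mul_of_nonneg_left h2 hn.le
    calc X = n * (1 / n * X) := by field_simp
      _ ≤ n * (1 / n * Y) ^ (t / 2) := this
  calc X ≤ n * (1 / n * Y) ^ (t / 2) := h3
    _ = n * ((1 / n) ^ (t / 2) * Y ^ (t / 2)) := by
        rw [Real.mul_rpow (by positivity) hY0]
    _ = (n * (1 / n) ^ (t / 2)) * Y ^ (t / 2) := by ring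
    _ = n ^ (1 - t / 2) * Y ^ (t / 2) := by
        congr 1
        rw [one_div, ← Real.rpow_neg_one n, ← Real.rpow_mul hn.le]
        nth_rewrite 1 [← Real.rpow_one n]
        rw [← Real.rpow_add hn]
        ring_nf

lemma rub_sum_blocks (g : ℕ → ℝ) (s M : ℕ) :
    ∑ j ∈ Finset.range M, ∑ n ∈ Finset.Ico (s * j) (s * (j + 1)), g n
      = ∑ n ∈ Finset.range (s * M), g n := by
  induction M with
  | zero => simp
  | succ M ih =>
    rw [Finset.sum_range_succ, ih, Finset.range_eq_Ico, Finset.range_eq_Ico]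
    exact Finset.sum_Ico_consecutive g (Nat.zero_le _) (Nat.mul_le_mul_left s (Nat.le_succ M))

end helpers

theorem rub_exact_recovery_vector (N L r s : ℕ) (hr : 0 < r) (hL : 0 < L)
    (k : ℝ) (hk : 1 < k) (hs : (s : ℝ) = k * r)
    (p q C₁ C₂ : ℝ) (hp : 0 < p) (hpq : p ≤ q) (hq1 : q ≤ 1)
    (hC₁ : 0 < C₁) (hC₂ : 0 < C₂)
    (hratio : C₂ / C₁ < k ^ ((1 / p - 1 / 2) * q))
    (A : (Fin N → ℝ) →ₗ[ℝ] (Fin L → ℝ))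
    (hRUB : ∀ x : Fin N → ℝ,
      (Finset.univ.filter (fun i => x i ≠ 0)).card ≤ s + r →
        C₁ * ((∑ i, (x i) ^ 2) ^ (q / 2)) ≤ (∑ j, |A x j| ^ q) / L ∧
        (∑ j, |A x j| ^ q) / L ≤ C₂ * ((∑ i, (x i) ^ 2) ^ (q / 2))) :
    ∀ x₀ : Fin N → ℝ, (Finset.univ.filter (fun i => x₀ i ≠ 0)).card ≤ r →
      ∀ x : Fin N → ℝ, A x = A x₀ → ∑ i, |x i| ^ p ≤ ∑ i, |x₀ i| ^ p → x = x₀ := by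
  classical
  intro x₀ hx₀ x hAx hpnorm
  -- basic positivity facts
  have hq0 : 0 < q := lt_of_lt_of_le hp hpq
  have hp1 : p ≤ 1 := le_trans hpq hq1
  have hk0 : (0 : ℝ) < k := lt_trans one_pos hk
  have hr' : (0 : ℝ) < (r : ℝ) := by exact_mod_cast hr
  have hsR : (0 : ℝ) < (s : ℝ) := by rw [hs]; positivity
  have hs0 : 0 < s := by exact_mod_cast hsR
  -- the difference vector
  set h : Fin N → ℝ := x - x₀ with hh
  have hhapp : ∀ i, h i = x i - x₀ i := fun i => rfl
  have hAh : A h = 0 := by rw [hh, map_sub, hAx, sub_self]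
  set T₀ : Finset (Fin N) := Finset.univ.filter (fun i => x₀ i ≠ 0) with hT₀
  set Tc : Finset (Fin N) := T₀ᶜ with hTc
  have hTcx₀ : ∀ i ∈ Tc, x₀ i = 0 := by
    intro i hi
    have := Finset.mem_compl.1 hi
    by_contra hne
    exact this (by simp [hT₀, hne])
  set m : ℕ := Tc.card with hm
  set e0 : Fin m ≃o {x // x ∈ Tc} := Tc.orderIsoOfFin rfl with he0
  set σ : Equiv.Perm (Fin m) := Tuple.sort (fun i : Fin m => -|h ((e0 i : Fin N))|) with hσ
  set e : Fin m → Fin N := fun i => (e0 (σ i) : Fin N) with he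
  have he_inj : Function.Injective e := by
    intro i j hij
    exact σ.injective (by
      have := Subtype.coe_injective hij
      exact e0.injective this)
  have he_mem : ∀ i, e i ∈ Tc := fun i => (e0 (σ i)).2
  set a : Fin m → ℝ := fun i => |h (e i)| with ha
  have ha_nonneg : ∀ i, 0 ≤ a i := fun i => abs_nonneg _
  have ha_anti : ∀ i j : Fin m, i ≤ j → a j ≤ a i := by
    intro i j hij
    have := Tuple.monotone_sort (fun i : Fin m => -|h ((e0 i : Fin N))|) hij
    simpa [ha, he] using this
  -- image of e is Tc
  have he_img : Finset.image e Finset.univ = Tc := by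
    apply Finset.eq_of_subset_of_card_le
    · intro i hi
      obtain ⟨i', _, rfl⟩ := Finset.mem_image.1 hi
      exact he_mem i'
    · rw [Finset.card_image_of_injective _ he_inj, Finset.card_univ, Fintype.card_fin]
  -- the ℕ-indexed rearranged absolute values
  set b : ℕ → ℝ := fun n => if hn : n < m then a ⟨n, hn⟩ else 0 with hb
  have hb_nonneg : ∀ n, 0 ≤ b n := by
    intro n
    by_cases hn : n < m <;> simp [hb, hn, ha_nonneg]
  have hb_anti : ∀ n l : ℕ, n ≤ l → b l ≤ b n := by
    intro n l hnl
    by_cases hl : l < m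
    · have hn : n < m := lt_of_le_of_lt hnl hl
      simp only [hb, dif_pos hl, dif_pos hn]
      exact ha_anti ⟨n, hn⟩ ⟨l, hl⟩ hnl
    · simp only [hb, dif_neg hl]
      exact hb_nonneg n
  -- blocks
  set Iblk : ℕ → Finset (Fin m) :=
    fun j => Finset.univ.filter (fun i : Fin m => s * j ≤ (i : ℕ) ∧ (i : ℕ) < s * (j + 1))
    with hIblk
  set Blk : ℕ → Finset (Fin N) := fun j => (Iblk j).image e with hBlk
  have hBlk_sub : ∀ j, Blk j ⊆ Tc := by
    intro j i hi
    obtain ⟨i', _, rfl⟩ := Finset.mem_image.1 hi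
    exact he_mem i'
  have hBlk_card : ∀ j, (Blk j).card ≤ s := by
    intro j
    rw [hBlk, Finset.card_image_of_injective _ he_inj]
    calc (Iblk j).card ≤ (Finset.Ico (s * j) (s * (j + 1))).card := by
          apply Finset.card_le_card_of_injOn (fun i : Fin m => (i : ℕ))
          · intro i hi
            simp only [hIblk] at hi
            simp only [Finset.mem_filter, Finset.mem_coe, Finset.coe_filter, Set.mem_setOf_eq] at hi
            exact Finset.mem_Ico.2 ⟨hi.2.1, hi.2.2⟩
          · intro i _ j _ hij
            exact Fin.ext hij
      _ = s := by rw [Nat.card_Ico, Nat.mul_succ]; omega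
  -- glue lemma: sums over Blk j of functions of |h i| equal ℕ-block sums of b
  have glue : ∀ (j : ℕ) (g : ℝ → ℝ), g 0 = 0 →
      ∑ i ∈ Blk j, g (|h i|) = ∑ n ∈ Finset.Ico (s * j) (s * (j + 1)), g (b n) := by
    intro j g hg0
    have hba : ∀ i' : Fin m, b (i' : ℕ) = a i' := by
      intro i'
      simp only [hb, dif_pos i'.isLt, Fin.eta]
    rw [hBlk, Finset.sum_image (fun x _ y _ hxy => he_inj hxy)]
    have step2 : ∑ i' ∈ Iblk j, g (|h (e i')|) =
        ∑ n ∈ (Finset.Ico (s * j) (s * (j + 1))).filter (fun n => n < m), g (b n) := by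
      refine Finset.sum_bij' (i := fun (i' : Fin m) (_ : i' ∈ Iblk j) => (i' : ℕ))
        (j := fun n hn => (⟨n, (Finset.mem_filter.1 hn).2⟩ : Fin m))
        ?_ ?_ ?_ ?_ ?_
      · intro i' hi'
        simp only [hIblk, Finset.mem_filter] at hi'
        exact Finset.mem_filter.2 ⟨Finset.mem_Ico.2 ⟨hi'.2.1, hi'.2.2⟩, i'.isLt⟩
      · intro n hn
        have hIco := Finset.mem_Ico.1 (Finset.mem_filter.1 hn).1
        simp only [hIblk, Finset.mem_filter]
        exact ⟨Finset.mem_univ _, hIco.1, hIco.2⟩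
      · intro i' _; rfl
      · intro n _; rfl
      · intro i' _
        rw [hba i']
    rw [step2]
    apply Finset.sum_subset (Finset.filter_subset _ _)
    intro n hn hn'
    have hnm : ¬ n < m := fun hm => hn' (Finset.mem_filter.2 ⟨hn, hm⟩)
    simp only [hb, dif_neg hnm]
    exact hg0
  -- also: the p-norm over Tc is the sum of b over range m
  have glue_all : ∀ (g : ℝ → ℝ), g 0 = 0 →
      ∑ i ∈ Tc, g (|h i|) = ∑ n ∈ Finset.range m, g (b n) := by
    intro g hg0
    have hba : ∀ i' : Fin m, b (i' : ℕ) = a i' := by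
      intro i'
      simp only [hb, dif_pos i'.isLt, Fin.eta]
    rw [← he_img, Finset.sum_image (fun x _ y _ hxy => he_inj hxy)]
    rw [← Fin.sum_univ_eq_sum_range (fun n => g (b n)) m]
    apply Finset.sum_congr rfl
    intro i' _
    rw [hba i']
  -- restriction operator
  set P : Finset (Fin N) → (Fin N → ℝ) := fun S i => if i ∈ S then h i else 0 with hP
  -- Step A : the p-quasinorm of h off the support is at most that on the support
  have stepA : ∑ i ∈ Tc, |h i| ^ p ≤ ∑ i ∈ T₀, |h i| ^ p := by
    have hsplit : ∀ f : Fin N → ℝ, ∑ i ∈ T₀, f i + ∑ i ∈ Tc, f i = ∑ i, f i :=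
      fun f => Finset.sum_add_sum_compl T₀ f
    have hA1 : ∑ i ∈ Tc, |x i| ^ p = ∑ i ∈ Tc, |h i| ^ p := by
      apply Finset.sum_congr rfl
      intro i hi
      rw [hhapp, hTcx₀ i hi, sub_zero]
    have hA2 : ∑ i ∈ Tc, |x₀ i| ^ p = 0 := by
      apply Finset.sum_eq_zero
      intro i hi
      rw [hTcx₀ i hi, abs_zero, Real.zero_rpow hp.ne']
    have hA3 : ∑ i ∈ T₀, |x₀ i| ^ p ≤ ∑ i ∈ T₀, |x i| ^ p + ∑ i ∈ T₀, |h i| ^ p := by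
      rw [← Finset.sum_add_distrib]
      apply Finset.sum_le_sum
      intro i _
      have habs : |x₀ i| ≤ |x i| + |h i| := by
        have hxi : x₀ i = x i - h i := by rw [hhapp]; ring
        rw [hxi]
        exact abs_sub _ _
      calc |x₀ i| ^ p ≤ (|x i| + |h i|) ^ p :=
            Real.rpow_le_rpow (abs_nonneg _) habs hp.le
        _ ≤ |x i| ^ p + |h i| ^ p :=
            rub_rpow_add_le (abs_nonneg _) (abs_nonneg _) hp.le hp1
    have hkey : ∑ i ∈ T₀, |x i| ^ p + ∑ i ∈ Tc, |x i| ^ p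
        ≤ ∑ i ∈ T₀, |x₀ i| ^ p + ∑ i ∈ Tc, |x₀ i| ^ p := by
      rw [hsplit, hsplit]; exact hpnorm
    linarith
  -- the decomposition of h into T₀ and the blocks
  have hdecomp : ∀ i, h i = P T₀ i + ∑ j ∈ Finset.range (m + 1), P (Blk j) i := by
    intro i
    by_cases hiT : i ∈ T₀
    · have hz : ∀ j ∈ Finset.range (m + 1), P (Blk j) i = 0 := by
        intro j _
        have : i ∉ Blk j := fun hmem => (Finset.mem_compl.1 (hBlk_sub j hmem)) hiT
        simp [hP, this]
      rw [Finset.sum_congr rfl hz]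
      simp [hP, hiT]
    · have hiTc : i ∈ Tc := Finset.mem_compl.2 hiT
      obtain ⟨i₀, rfl⟩ : ∃ i₀, e i₀ = i := by
        obtain ⟨i₀, _, hmm⟩ := Finset.mem_image.1 (he_img.symm ▸ hiTc)
        exact ⟨i₀, hmm⟩
      have hmem_iff : ∀ j : ℕ, e i₀ ∈ Blk j ↔ j = (i₀ : ℕ) / s := by
        intro j
        constructor
        · intro hmem
          obtain ⟨i', hi', hei⟩ := Finset.mem_image.1 hmem
          have hii : i' = i₀ := he_inj hei
          subst hii
          simp only [hIblk, Finset.mem_filter] at hi'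
          have h1 := hi'.2.1
          have h2 := hi'.2.2
          have hj1 : j ≤ (i' : ℕ) / s :=
            (Nat.le_div_iff_mul_le hs0).2 (by rw [mul_comm]; exact h1)
          have hj2 : (i' : ℕ) / s < j + 1 :=
            (Nat.div_lt_iff_lt_mul hs0).2 (by rw [mul_comm] at h2; exact h2)
          omega
        · intro hj
          subst hj
          refine Finset.mem_image.2 ⟨i₀, ?_, rfl⟩
          simp only [hIblk, Finset.mem_filter]
          refine ⟨Finset.mem_univ _, ?_, ?_⟩
          · rw [mul_comm]; exact Nat.div_mul_le_self _ _
          · rw [mul_comm]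
            exact (Nat.div_lt_iff_lt_mul hs0).1 (Nat.lt_succ_self _)
      have hj₀mem : (i₀ : ℕ) / s ∈ Finset.range (m + 1) := by
        have h1 := i₀.isLt
        have h2 := Nat.div_le_self (i₀ : ℕ) s
        exact Finset.mem_range.2 (by omega)
      rw [Finset.sum_eq_single_of_mem ((i₀ : ℕ) / s) hj₀mem
        (fun j _ hne => by
          have : e i₀ ∉ Blk j := fun hmem => hne ((hmem_iff j).1 hmem)
          simp [hP, this])]
      have hmem₀ : e i₀ ∈ Blk ((i₀ : ℕ) / s) := (hmem_iff _).2 rfl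
      simp [hP, hiT, hmem₀]
  -- v₀ and the W j
  set v₀ : Fin N → ℝ := P (T₀ ∪ Blk 0) with hv₀
  have hv₀_split : ∀ i, v₀ i = P T₀ i + P (Blk 0) i := by
    intro i
    by_cases h1 : i ∈ T₀
    · have h2 : i ∉ Blk 0 := fun hmem => (Finset.mem_compl.1 (hBlk_sub 0 hmem)) h1
      simp [hv₀, hP, h1, h2]
    · by_cases h2 : i ∈ Blk 0 <;> simp [hv₀, hP, h1, h2]
  set W : ℕ → (Fin N → ℝ) := fun j => P (Blk (j + 1)) with hW
  have hdecomp2 : h = v₀ + ∑ j ∈ Finset.range m, W j := by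
    funext i
    rw [Pi.add_apply, Finset.sum_apply, hv₀_split]
    have hd := hdecomp i
    rw [Finset.sum_range_succ'] at hd
    rw [hd]
    simp only [hW]
    ring
  have hAv₀ : ∀ l, A v₀ l = -∑ j ∈ Finset.range m, A (W j) l := by
    have h0 : A v₀ + ∑ j ∈ Finset.range m, A (W j) = 0 := by
      rw [← map_sum, ← map_add, ← hdecomp2, hAh]
    intro l
    have h1 := congrFun h0 l
    rw [Pi.add_apply, Finset.sum_apply, Pi.zero_apply] at h1
    linarith
  -- sums of squares / supports of restrictions
  have hPsum_sq : ∀ S : Finset (Fin N), ∑ i, (P S i) ^ 2 = ∑ i ∈ S, (h i) ^ 2 := by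
    intro S
    rw [← Finset.sum_subset (Finset.subset_univ S) (fun i _ hi => by simp [hP, hi])]
    exact Finset.sum_congr rfl (fun i hi => by simp [hP, hi])
  have hsupp : ∀ S : Finset (Fin N),
      (Finset.univ.filter (fun i => P S i ≠ 0)).card ≤ S.card := by
    intro S
    apply Finset.card_le_card
    intro i hi
    simp only [Finset.mem_filter] at hi
    by_contra hiS
    exact hi.2 (by simp [hP, hiS])
  -- apply RUB to v₀
  have hv₀_sparse : (Finset.univ.filter (fun i => v₀ i ≠ 0)).card ≤ s + r :=
    calc (Finset.univ.filter (fun i => v₀ i ≠ 0)).card ≤ (T₀ ∪ Blk 0).card := hsupp _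
      _ ≤ T₀.card + (Blk 0).card := Finset.card_union_le _ _
      _ ≤ r + s := Nat.add_le_add hx₀ (hBlk_card 0)
      _ = s + r := Nat.add_comm r s
  obtain ⟨hRUB1, -⟩ := hRUB v₀ hv₀_sparse
  -- block quantities over ℕ
  set A2 : ℕ → ℝ := fun j => ∑ n ∈ Finset.Ico (s * j) (s * (j + 1)), (b n) ^ 2 with hA2
  set Ap : ℕ → ℝ := fun j => ∑ n ∈ Finset.Ico (s * j) (s * (j + 1)), (b n) ^ p with hAp
  have hA2_nonneg : ∀ j, 0 ≤ A2 j := fun j => Finset.sum_nonneg fun n _ => sq_nonneg _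
  have hAp_nonneg : ∀ j, 0 ≤ Ap j :=
    fun j => Finset.sum_nonneg fun n _ => Real.rpow_nonneg (hb_nonneg n) p
  -- bound each W j by RUB and the block sums
  have hWj : ∀ j ∈ Finset.range m,
      (∑ l, |A (W j) l| ^ q) / L ≤ C₂ * (A2 (j + 1)) ^ (q / 2) := by
    intro j _
    have hsp : (Finset.univ.filter (fun i => W j i ≠ 0)).card ≤ s + r :=
      calc (Finset.univ.filter (fun i => W j i ≠ 0)).card ≤ (Blk (j + 1)).card := hsupp _
        _ ≤ s := hBlk_card _
        _ ≤ s + r := Nat.le_add_right s r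
    obtain ⟨-, hub⟩ := hRUB (W j) hsp
    have hsq : ∑ i, (W j i) ^ 2 = A2 (j + 1) := by
      rw [hW, hPsum_sq]
      have hg := glue (j + 1) (fun t => t ^ 2) (by norm_num)
      simp only [hA2]
      rw [← hg]
      exact Finset.sum_congr rfl fun i _ => (sq_abs _).symm
    rwa [hsq] at hub
  -- Step C : block comparison
  have hqp1 : (1 : ℝ) ≤ q / p := (one_le_div hp).2 hpq
  have stepC : ∀ j : ℕ, (A2 (j + 1)) ^ (q / 2) ≤ (s : ℝ) ^ (q / 2 - q / p) * (Ap j) ^ (q / p) := by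
    intro j
    have hcard : ∀ jj : ℕ, (Finset.Ico (s * jj) (s * (jj + 1))).card = s := by
      intro jj
      rw [Nat.card_Ico]
      have hms : s * (jj + 1) = s * jj + s := Nat.mul_succ s jj
      omega
    have hApS : 0 ≤ Ap j / s := div_nonneg (hAp_nonneg j) hsR.le
    have hpt : ∀ n ∈ Finset.Ico (s * (j + 1)) (s * (j + 1 + 1)), (b n) ^ 2 ≤ (Ap j / s) ^ (2 / p) := by
      intro n hn
      have hn1 := (Finset.mem_Ico.1 hn).1
      have hbl : ∀ l ∈ Finset.Ico (s * j) (s * (j + 1)), (b n) ^ p ≤ (b l) ^ p := by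
        intro l hl
        have hl2 := (Finset.mem_Ico.1 hl).2
        exact Real.rpow_le_rpow (hb_nonneg n) (hb_anti l n (by omega)) hp.le
      have hsum : (s : ℝ) * (b n) ^ p ≤ Ap j := by
        have hss := Finset.sum_le_sum hbl
        rw [Finset.sum_const, hcard j, nsmul_eq_mul] at hss
        simpa [hAp] using hss
      have hbp : (b n) ^ p ≤ Ap j / s := by
        rw [le_div_iff₀ hsR]
        linarith
      have hb2 : (b n) ^ 2 = ((b n) ^ p) ^ (2 / p) := by
        rw [← Real.rpow_natCast (b n) 2, ← Real.rpow_mul (hb_nonneg n)]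
        congr 1
        field_simp
        norm_num
      rw [hb2]
      exact Real.rpow_le_rpow (Real.rpow_nonneg (hb_nonneg n) p) hbp (by positivity)
    have hA2le : A2 (j + 1) ≤ (s : ℝ) * (Ap j / s) ^ (2 / p) := by
      have hss := Finset.sum_le_sum hpt
      rw [Finset.sum_const, hcard (j + 1), nsmul_eq_mul] at hss
      simpa [hA2] using hss
    calc (A2 (j + 1)) ^ (q / 2) ≤ ((s : ℝ) * (Ap j / s) ^ (2 / p)) ^ (q / 2) :=
          Real.rpow_le_rpow (hA2_nonneg _) hA2le (by positivity)
      _ = (s : ℝ) ^ (q / 2) * ((Ap j / s) ^ (2 / p)) ^ (q / 2) :=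
          Real.mul_rpow hsR.le (Real.rpow_nonneg hApS _)
      _ = (s : ℝ) ^ (q / 2) * (Ap j / s) ^ (q / p) := by
          rw [← Real.rpow_mul hApS]
          congr 1
          field_simp
      _ = (s : ℝ) ^ (q / 2) * (Ap j ^ (q / p) / (s : ℝ) ^ (q / p)) := by
          rw [Real.div_rpow (hAp_nonneg j) hsR.le]
      _ = (s : ℝ) ^ (q / 2 - q / p) * Ap j ^ (q / p) := by
          rw [Real.rpow_sub hsR]
          ring
  -- sum of Step C
  set β : ℝ := ∑ i ∈ Tc, |h i| ^ p with hβ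
  have hβ_nonneg : 0 ≤ β := Finset.sum_nonneg fun i _ => Real.rpow_nonneg (abs_nonneg _) p
  have stepCsum : ∑ j ∈ Finset.range m, (A2 (j + 1)) ^ (q / 2)
      ≤ (s : ℝ) ^ (q / 2 - q / p) * β ^ (q / p) := by
    have hsums : ∑ j ∈ Finset.range m, Ap j = β := by
      have h1 : ∑ j ∈ Finset.range m, Ap j = ∑ n ∈ Finset.range (s * m), (b n) ^ p := by
        simp only [hAp]
        exact rub_sum_blocks (fun n => (b n) ^ p) s m
      have h2 : ∑ n ∈ Finset.range (s * m), (b n) ^ p = ∑ n ∈ Finset.range m, (b n) ^ p := by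
        symm
        apply Finset.sum_subset
        · intro n hn
          exact Finset.mem_range.2
            (lt_of_lt_of_le (Finset.mem_range.1 hn) (Nat.le_mul_of_pos_left m hs0))
        · intro n _ hn
          have hnm : ¬ n < m := fun hm => hn (Finset.mem_range.2 hm)
          simp only [hb, dif_neg hnm]
          exact Real.zero_rpow hp.ne'
      have h3 : β = ∑ n ∈ Finset.range m, (b n) ^ p := by
        rw [hβ]
        exact glue_all (fun t => t ^ p) (Real.zero_rpow hp.ne')
      rw [h1, h2, ← h3]
    calc ∑ j ∈ Finset.range m, (A2 (j + 1)) ^ (q / 2)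
        ≤ ∑ j ∈ Finset.range m, (s : ℝ) ^ (q / 2 - q / p) * (Ap j) ^ (q / p) :=
          Finset.sum_le_sum fun j _ => stepC j
      _ = (s : ℝ) ^ (q / 2 - q / p) * ∑ j ∈ Finset.range m, (Ap j) ^ (q / p) :=
          (Finset.mul_sum _ _ _).symm
      _ ≤ (s : ℝ) ^ (q / 2 - q / p) * (∑ j ∈ Finset.range m, Ap j) ^ (q / p) := by
          refine mul_le_mul_of_nonneg_left ?_ (Real.rpow_nonneg hsR.le _)
          exact rub_sum_rpow_le _ _ (fun j _ => hAp_nonneg j) hqp1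
      _ = (s : ℝ) ^ (q / 2 - q / p) * β ^ (q / p) := by rw [hsums]
  -- Hölder on T₀
  set E : ℝ := ∑ i ∈ T₀, (h i) ^ 2 with hE
  have hE_nonneg : 0 ≤ E := Finset.sum_nonneg fun i _ => sq_nonneg _
  set D : ℝ := ∑ i, (v₀ i) ^ 2 with hD
  have hD_nonneg : 0 ≤ D := Finset.sum_nonneg fun i _ => sq_nonneg _
  have hED : E ≤ D := by
    rw [hD, hPsum_sq]
    exact Finset.sum_le_sum_of_subset_of_nonneg Finset.subset_union_left
      (fun i _ _ => sq_nonneg _)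
  have hβα : β ^ (q / p) ≤ ((r : ℝ) ^ (1 - p / 2) * E ^ (p / 2)) ^ (q / p) := by
    have hα : ∑ i ∈ T₀, |h i| ^ p ≤ (r : ℝ) ^ (1 - p / 2) * E ^ (p / 2) := by
      have hH := rub_holder T₀ (fun i => |h i|) (fun i _ => abs_nonneg _) hp (by linarith)
      have hsq : ∑ i ∈ T₀, |h i| ^ 2 = E := by
        rw [hE]
        exact Finset.sum_congr rfl fun i _ => sq_abs _
      rw [hsq] at hH
      refine le_trans hH ?_
      refine mul_le_mul_of_nonneg_right ?_ (Real.rpow_nonneg hE_nonneg _)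
      exact Real.rpow_le_rpow (Nat.cast_nonneg _) (by exact_mod_cast hx₀) (by linarith)
    have hα_nonneg : 0 ≤ ∑ i ∈ T₀, |h i| ^ p :=
      Finset.sum_nonneg fun i _ => Real.rpow_nonneg (abs_nonneg _) p
    calc β ^ (q / p) ≤ (∑ i ∈ T₀, |h i| ^ p) ^ (q / p) :=
          Real.rpow_le_rpow hβ_nonneg stepA (by positivity)
      _ ≤ ((r : ℝ) ^ (1 - p / 2) * E ^ (p / 2)) ^ (q / p) :=
          Real.rpow_le_rpow hα_nonneg hα (by positivity)
  -- the κ identity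
  have hκ : (s : ℝ) ^ (q / 2 - q / p) * ((r : ℝ) ^ (1 - p / 2) * E ^ (p / 2)) ^ (q / p)
      ≤ k ^ (-((1 / p - 1 / 2) * q)) * D ^ (q / 2) := by
    have hexp : ((r : ℝ) ^ (1 - p / 2) * E ^ (p / 2)) ^ (q / p)
        = (r : ℝ) ^ ((1 - p / 2) * (q / p)) * E ^ (q / 2) := by
      rw [Real.mul_rpow (Real.rpow_nonneg hr'.le _) (Real.rpow_nonneg hE_nonneg _),
        ← Real.rpow_mul hr'.le, ← Real.rpow_mul hE_nonneg]
      congr 1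
      rw [div_mul_div_comm, mul_comm 2 p, mul_div_mul_left q 2 hp.ne']
    have hsplit : (s : ℝ) ^ (q / 2 - q / p) * ((r : ℝ) ^ ((1 - p / 2) * (q / p)) * E ^ (q / 2))
        = k ^ (-((1 / p - 1 / 2) * q)) * E ^ (q / 2) := by
      have hkr : (s : ℝ) ^ (q / 2 - q / p) = k ^ (q / 2 - q / p) * (r : ℝ) ^ (q / 2 - q / p) := by
        rw [hs, Real.mul_rpow hk0.le hr'.le]
      have hr0 : (r : ℝ) ^ (q / 2 - q / p) * (r : ℝ) ^ ((1 - p / 2) * (q / p)) = 1 := by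
        rw [← Real.rpow_add hr']
        have hz : (q / 2 - q / p) + (1 - p / 2) * (q / p) = 0 := by
          field_simp
          ring
        rw [hz, Real.rpow_zero]
      have hke : k ^ (q / 2 - q / p) = k ^ (-((1 / p - 1 / 2) * q)) := by
        congr 1
        ring
      calc (s : ℝ) ^ (q / 2 - q / p) * ((r : ℝ) ^ ((1 - p / 2) * (q / p)) * E ^ (q / 2))
          = k ^ (q / 2 - q / p) *
            ((r : ℝ) ^ (q / 2 - q / p) * (r : ℝ) ^ ((1 - p / 2) * (q / p))) * E ^ (q / 2) := by
            rw [hkr]; ring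
        _ = k ^ (-((1 / p - 1 / 2) * q)) * E ^ (q / 2) := by rw [hr0, hke]; ring
    rw [hexp, hsplit]
    exact mul_le_mul_of_nonneg_left
      (Real.rpow_le_rpow hE_nonneg hED (by positivity))
      (Real.rpow_pos_of_pos hk0 _).le
  -- grand chain
  have hL' : (0 : ℝ) < L := by exact_mod_cast hL
  have hAbound : (∑ l, |A v₀ l| ^ q) ≤ ∑ j ∈ Finset.range m, ∑ l, |A (W j) l| ^ q := by
    calc ∑ l, |A v₀ l| ^ q = ∑ l, |∑ j ∈ Finset.range m, A (W j) l| ^ q := by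
          refine Finset.sum_congr rfl fun l _ => ?_
          rw [hAv₀ l, abs_neg]
      _ ≤ ∑ l, ∑ j ∈ Finset.range m, |A (W j) l| ^ q :=
          Finset.sum_le_sum fun l _ => rub_abs_sum_rpow _ _ hq0 hq1
      _ = ∑ j ∈ Finset.range m, ∑ l, |A (W j) l| ^ q := Finset.sum_comm
  have hfinal : C₁ * D ^ (q / 2) ≤ (C₂ * k ^ (-((1 / p - 1 / 2) * q))) * D ^ (q / 2) := by
    calc C₁ * D ^ (q / 2) ≤ (∑ l, |A v₀ l| ^ q) / L := hRUB1
      _ ≤ (∑ j ∈ Finset.range m, ∑ l, |A (W j) l| ^ q) / L := by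
          gcongr
      _ = ∑ j ∈ Finset.range m, (∑ l, |A (W j) l| ^ q) / L := Finset.sum_div _ _ _
      _ ≤ ∑ j ∈ Finset.range m, C₂ * (A2 (j + 1)) ^ (q / 2) := Finset.sum_le_sum hWj
      _ = C₂ * ∑ j ∈ Finset.range m, (A2 (j + 1)) ^ (q / 2) := (Finset.mul_sum _ _ _).symm
      _ ≤ C₂ * ((s : ℝ) ^ (q / 2 - q / p) * β ^ (q / p)) :=
          mul_le_mul_of_nonneg_left stepCsum hC₂.le
      _ ≤ C₂ * ((s : ℝ) ^ (q / 2 - q / p) * ((r : ℝ) ^ (1 - p / 2) * E ^ (p / 2)) ^ (q / p)) := by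
          refine mul_le_mul_of_nonneg_left ?_ hC₂.le
          exact mul_le_mul_of_nonneg_left hβα (Real.rpow_nonneg hsR.le _)
      _ ≤ C₂ * (k ^ (-((1 / p - 1 / 2) * q)) * D ^ (q / 2)) :=
          mul_le_mul_of_nonneg_left hκ hC₂.le
      _ = (C₂ * k ^ (-((1 / p - 1 / 2) * q))) * D ^ (q / 2) := by ring
  have hlt : C₂ * k ^ (-((1 / p - 1 / 2) * q)) < C₁ := by
    have hkn : 0 < k ^ (-((1 / p - 1 / 2) * q)) := Real.rpow_pos_of_pos hk0 _
    have hone : k ^ ((1 / p - 1 / 2) * q) * k ^ (-((1 / p - 1 / 2) * q)) = 1 := by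
      rw [← Real.rpow_add hk0]; simp
    have hC2' : C₂ < k ^ ((1 / p - 1 / 2) * q) * C₁ := by
      rw [div_lt_iff₀ hC₁] at hratio
      linarith [hratio]
    calc C₂ * k ^ (-((1 / p - 1 / 2) * q))
        < (k ^ ((1 / p - 1 / 2) * q) * C₁) * k ^ (-((1 / p - 1 / 2) * q)) :=
          mul_lt_mul_of_pos_right hC2' hkn
      _ = C₁ * (k ^ ((1 / p - 1 / 2) * q) * k ^ (-((1 / p - 1 / 2) * q))) := by ring
      _ = C₁ := by rw [hone, mul_one]
  have hDzero : D = 0 := by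
    by_contra hne
    have hDpos : 0 < D := lt_of_le_of_ne hD_nonneg (Ne.symm hne)
    have ht : 0 < D ^ (q / 2) := Real.rpow_pos_of_pos hDpos _
    have hcon := mul_lt_mul_of_pos_right hlt ht
    linarith
  -- conclude that h vanishes
  have hv₀zero : ∀ i, v₀ i = 0 := by
    intro i
    have hsum0 : ∑ i, (v₀ i) ^ 2 = 0 := by rw [← hD]; exact hDzero
    have h2 := (Finset.sum_eq_zero_iff_of_nonneg
      (fun (i : Fin N) (_ : i ∈ Finset.univ) => sq_nonneg (v₀ i))).1 hsum0 i
      (Finset.mem_univ i)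
    exact pow_eq_zero_iff (by norm_num) |>.1 h2
  have hT₀zero : ∀ i ∈ T₀, h i = 0 := by
    intro i hi
    have hv := hv₀zero i
    have hiu : i ∈ T₀ ∪ Blk 0 := Finset.mem_union_left _ hi
    rw [hv₀] at hv
    simpa [hP, hiu] using hv
  have hTczero : ∀ i ∈ Tc, h i = 0 := by
    have hα0 : ∑ i ∈ T₀, |h i| ^ p = 0 :=
      Finset.sum_eq_zero fun i hi => by rw [hT₀zero i hi, abs_zero, Real.zero_rpow hp.ne']
    have hβ0 : β = 0 := le_antisymm (hα0 ▸ stepA) hβ_nonneg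
    intro i hi
    have hterm : |h i| ^ p = 0 :=
      (Finset.sum_eq_zero_iff_of_nonneg
        (fun (i : Fin N) (_ : i ∈ Tc) => Real.rpow_nonneg (abs_nonneg (h i)) p)).1 hβ0 i hi
    have habs : |h i| = 0 := by
      by_contra hcon
      have hpos : 0 < |h i| := lt_of_le_of_ne (abs_nonneg _) (Ne.symm hcon)
      exact (Real.rpow_pos_of_pos hpos p).ne' hterm
    exact abs_eq_zero.1 habs
  funext i
  have hzero : h i = 0 := by
    by_cases hi : i ∈ T₀
    · exact hT₀zero i hi
    · exact hTczero i (Finset.mem_compl.2 hi)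
  have hfin := hhapp i
  rw [hzero] at hfin
  linarith
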